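/- arXiv:2504.11989 — 3 statements merged into one kernel-verified Lean document; each statement's English description precedes it below -/
import Mathlib

section
/- Let Λ = Aℤ^d be a Bravais lattice with A ∈ ℝ^{d×d} invertible, let n ∈ ℕ, n ≥ 1, and let ν ∈ ℂ^n with Re(ν_j) > d for all 1 ≤ j ≤ n. Then the n-body lattice sum ∑' ∏_{j=1}^n |x^(j) − x^(j−1)|^{−ν_j}, taken over x^(1),…,x^(n−1) ∈ Λ with x^(0) = x^(n) = 0 and excluding all tuples with x^(j) = x^(j−1) for some j, converges absolutely; hence the n-body zeta function ζ^(n)_Λ(ν) is well-defined. -/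
open MeasureTheory Complex
open scoped Real InnerProductSpace

/-- The lattice point `A m` for an integer vector `m`, as an element of Euclidean space. -/
noncomputable def latticePt {d : ℕ} (A : Matrix (Fin d) (Fin d) ℝ) (m : Fin d → ℤ) :
    EuclideanSpace ℝ (Fin d) :=
  WithLp.toLp 2 (A.mulVec fun j => (m j : ℝ))

/-- The Bravais lattice `Λ = A ℤ^d`. -/
def lattice {d : ℕ} (A : Matrix (Fin d) (Fin d) ℝ) : Set (EuclideanSpace ℝ (Fin d)) :=
  Set.range (latticePt A)

/-- The chain of points `x^(0), x^(1), …, x^(n)` with `x^(0) = x^(n) = 0` and inner points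
`x^(1), …, x^(n-1)` given by `x`. -/
def chainPt {d : ℕ} (n : ℕ) (x : Fin (n - 1) → EuclideanSpace ℝ (Fin d)) (j : ℕ) :
    EuclideanSpace ℝ (Fin d) :=
  if h : 0 < j ∧ j < n then x ⟨j - 1, by omega⟩ else 0

/-- The summand `∏_{j=1}^n |x^(j) - x^(j-1)|^{-ν_j}` of the `n`-body zeta function. -/
noncomputable def nBodySummand {d : ℕ} (n : ℕ) (ν : Fin n → ℂ)
    (x : Fin (n - 1) → EuclideanSpace ℝ (Fin d)) : ℂ :=
  ∏ j : Fin n, (‖chainPt n x ((j : ℕ) + 1) - chainPt n x (j : ℕ)‖ : ℂ) ^ (-(ν j))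

/-- The index set of the primed sum: all tuples `x^(1), …, x^(n-1)` of lattice points such
that no two consecutive chain points coincide. -/
def nBodyDomain {d : ℕ} (A : Matrix (Fin d) (Fin d) ℝ) (n : ℕ) :
    Set (Fin (n - 1) → EuclideanSpace ℝ (Fin d)) :=
  {x | (∀ i, x i ∈ lattice A) ∧
    ∀ j : Fin n, chainPt n x ((j : ℕ) + 1) ≠ chainPt n x (j : ℕ)}

/-- The `n`-body zeta function `ζ^(n)_Λ(ν)`. -/
noncomputable def nBodyZeta {d : ℕ} (A : Matrix (Fin d) (Fin d) ℝ) (n : ℕ)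
    (ν : Fin n → ℂ) : ℂ :=
  ∑' x : nBodyDomain A n, nBodySummand n ν x.1

/-! ### Auxiliary material -/

lemma aux_base_summable {p : ℝ} (hp : 1 < p) :
    Summable fun k : ℤ => (max |(k : ℝ)| 1) ^ (-p) := by
  have h1 := Real.summable_abs_int_rpow hp
  have h2 : Summable fun k : ℤ => if k = 0 then (1 : ℝ) else 0 :=
    (hasSum_ite_eq (0 : ℤ) (1 : ℝ)).summable
  refine (h1.add h2).of_nonneg_of_le (fun k => by positivity) fun k => ?_
  by_cases hk : k = 0
  · simp [hk, Real.zero_rpow (show -p ≠ 0 by intro h; simp at h; linarith)]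
  · have h1k : (1 : ℝ) ≤ |(k : ℝ)| := by
      rw [← Int.cast_abs]
      exact_mod_cast Int.one_le_abs hk
    rw [max_eq_left h1k, if_neg hk, add_zero]

lemma aux_summable_pi_prod {γ : Type*} (k : ℕ) (g : Fin k → γ → ℝ)
    (hg0 : ∀ j x, 0 ≤ g j x) (hg : ∀ j, Summable (g j)) :
    Summable fun m : Fin k → γ => ∏ j, g j (m j) := by
  induction k with
  | zero => exact Summable.of_finite
  | succ k ih =>
    have h := (hg 0).mul_of_nonneg
      (ih (fun j => g j.succ) (fun j x => hg0 _ _) (fun j => hg j.succ))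
      (fun x => hg0 0 x)
      (fun m => Finset.prod_nonneg fun j _ => hg0 _ _)
    refine ((Fin.consEquiv fun _ : Fin (k + 1) => γ).summable_iff).mp (h.congr fun p => ?_)
    simp [Fin.prod_univ_succ, Fin.consEquiv]

/-- The integer vector `m` viewed as a point of Euclidean space. -/
def intVec {d : ℕ} (m : Fin d → ℤ) : EuclideanSpace ℝ (Fin d) := WithLp.toLp 2 (fun j => (m j : ℝ))

lemma aux_abs_apply_le_norm {d : ℕ} (v : EuclideanSpace ℝ (Fin d)) (i : Fin d) :
    |v i| ≤ ‖v‖ := by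
  rw [EuclideanSpace.norm_eq]
  calc |v i| = Real.sqrt (‖v i‖ ^ 2) := by
        rw [Real.sqrt_sq_eq_abs, Real.norm_eq_abs, _root_.abs_abs]
  _ ≤ Real.sqrt (∑ j, ‖v j‖ ^ 2) :=
      Real.sqrt_le_sqrt (Finset.single_le_sum (f := fun j => ‖v j‖ ^ 2)
        (fun j _ => by positivity) (Finset.mem_univ i))

lemma latticePt_zero {d : ℕ} (A : Matrix (Fin d) (Fin d) ℝ) : latticePt A 0 = 0 := by
  unfold latticePt
  have : (fun j => (((0 : Fin d → ℤ) j : ℝ))) = (0 : Fin d → ℝ) := by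
    funext j; simp
  rw [this, Matrix.mulVec_zero, WithLp.toLp_zero]

lemma latticePt_sub {d : ℕ} (A : Matrix (Fin d) (Fin d) ℝ) (a b : Fin d → ℤ) :
    latticePt A (a - b) = latticePt A a - latticePt A b := by
  unfold latticePt
  have : (fun j => (((a - b) j : ℝ))) =
      (fun j => ((a j : ℝ))) - (fun j => ((b j : ℝ))) := by
    funext j; push_cast [Pi.sub_apply]; ring
  rw [this, Matrix.mulVec_sub, WithLp.toLp_sub]

lemma aux_exists_lattice_bound {d : ℕ} (A : Matrix (Fin d) (Fin d) ℝ) (hA : IsUnit A.det) :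
    ∃ K : ℝ, 0 < K ∧ ∀ m : Fin d → ℤ, ‖intVec m‖ ≤ K * ‖latticePt A m‖ := by
  have hBA : A⁻¹ * A = 1 := Matrix.nonsing_inv_mul A hA
  let L : EuclideanSpace ℝ (Fin d) →ₗ[ℝ] EuclideanSpace ℝ (Fin d) := Matrix.toEuclideanLin A⁻¹
  let L' : EuclideanSpace ℝ (Fin d) →L[ℝ] EuclideanSpace ℝ (Fin d) :=
    LinearMap.toContinuousLinearMap L
  refine ⟨‖L'‖ + 1, by positivity, fun m => ?_⟩
  have hLlat : L' (latticePt A m) = intVec m := by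
    show WithLp.toLp 2 (A⁻¹.mulVec (A.mulVec fun j => (m j : ℝ))) = intVec m
    rw [Matrix.mulVec_mulVec, hBA, Matrix.one_mulVec]
    rfl
  calc ‖intVec m‖ = ‖L' (latticePt A m)‖ := by rw [hLlat]
  _ ≤ ‖L'‖ * ‖latticePt A m‖ := L'.le_opNorm _
  _ ≤ (‖L'‖ + 1) * ‖latticePt A m‖ := by
      apply mul_le_mul_of_nonneg_right (by linarith) (norm_nonneg _)

lemma aux_latticePt_injective {d : ℕ} (A : Matrix (Fin d) (Fin d) ℝ) (hA : IsUnit A.det) :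
    Function.Injective (latticePt A) := by
  have hBA : A⁻¹ * A = 1 := Matrix.nonsing_inv_mul A hA
  intro a b hab
  have key : ∀ c : Fin d → ℤ,
      A⁻¹.mulVec (A.mulVec fun j => (c j : ℝ)) = fun j => (c j : ℝ) := by
    intro c
    rw [Matrix.mulVec_mulVec, hBA, Matrix.one_mulVec]
  have h2 : (fun j => ((a j : ℝ))) = fun j => ((b j : ℝ)) := by
    rw [← key a, ← key b]
    exact congrArg (fun v => A⁻¹.mulVec (WithLp.ofLp v)) hab
  funext i
  have : ((a i : ℝ)) = (b i : ℝ) := congrFun h2 i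
  exact_mod_cast this

lemma aux_one_le_norm_intVec {d : ℕ} {m : Fin d → ℤ} (hm : m ≠ 0) :
    (1 : ℝ) ≤ ‖intVec m‖ := by
  obtain ⟨i0, hi0⟩ := Function.ne_iff.mp hm
  have h1 : (1 : ℝ) ≤ |(m i0 : ℝ)| := by
    rw [← Int.cast_abs]; exact_mod_cast Int.one_le_abs hi0
  exact h1.trans (aux_abs_apply_le_norm (intVec m) i0)

lemma aux_max_le_norm_intVec {d : ℕ} {m : Fin d → ℤ} (hm : m ≠ 0) (i : Fin d) :
    max |(m i : ℝ)| 1 ≤ ‖intVec m‖ :=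
  max_le (aux_abs_apply_le_norm (intVec m) i) (aux_one_le_norm_intVec hm)

/-- Each nonzero lattice point has norm at least `1/K`. -/
lemma aux_lattice_norm_lb {d : ℕ} {A : Matrix (Fin d) (Fin d) ℝ} {K : ℝ} (hK0 : 0 < K)
    (hKm : ∀ m : Fin d → ℤ, ‖intVec m‖ ≤ K * ‖latticePt A m‖)
    {m : Fin d → ℤ} (hm : m ≠ 0) : 1 / K ≤ ‖latticePt A m‖ := by
  rw [div_le_iff₀' hK0]
  exact le_trans (aux_one_le_norm_intVec hm) (hKm m)

/-- The key comparison bound for a single factor. -/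
lemma aux_factor_bound {d : ℕ} (hd : 0 < d) {A : Matrix (Fin d) (Fin d) ℝ} {K : ℝ}
    (hK0 : 0 < K) (hKm : ∀ m : Fin d → ℤ, ‖intVec m‖ ≤ K * ‖latticePt A m‖)
    {m : Fin d → ℤ} (hm : m ≠ 0) {s : ℝ} (hs : 0 ≤ s) :
    ‖latticePt A m‖ ^ (-s) ≤ K ^ s * ∏ i, (max |(m i : ℝ)| 1) ^ (-(s / d)) := by
  set N := ‖intVec m‖ with hN
  have hN1 : (1 : ℝ) ≤ N := aux_one_le_norm_intVec hm
  have hN0 : 0 < N := by linarith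
  set P := ∏ i, max |(m i : ℝ)| 1 with hP
  have hP0 : 0 < P := Finset.prod_pos fun i _ => lt_of_lt_of_le one_pos (le_max_right _ _)
  have hPN : P ≤ N ^ d := by
    calc P ≤ ∏ _i : Fin d, N := Finset.prod_le_prod
            (fun i _ => le_trans zero_le_one (le_max_right _ _))
            (fun i _ => aux_max_le_norm_intVec hm i)
    _ = N ^ d := by rw [Finset.prod_const, Finset.card_univ, Fintype.card_fin]
  have step1 : ‖latticePt A m‖ ^ (-s) ≤ (N / K) ^ (-s) := by
    apply Real.rpow_le_rpow_of_nonpos (by positivity) _ (by linarith)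
    rw [div_le_iff₀ hK0, mul_comm]
    exact hKm m
  have step2 : (N / K) ^ (-s) = K ^ s * N ^ (-s) := by
    rw [div_eq_mul_inv, Real.mul_rpow hN0.le (by positivity),
      Real.inv_rpow hK0.le, Real.rpow_neg hK0.le, inv_inv, mul_comm]
  have step3 : N ^ (-s) ≤ P ^ (-(s / d)) := by
    have hup : N ^ (-s) = (N ^ d) ^ (-(s / d)) := by
      rw [← Real.rpow_natCast N d, ← Real.rpow_mul hN0.le]
      congr 1
      have hd' : (d : ℝ) ≠ 0 := by positivity
      field_simp
    rw [hup]
    have hsd : (0:ℝ) ≤ s / d := div_nonneg hs (Nat.cast_nonneg d)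
    exact Real.rpow_le_rpow_of_nonpos hP0 hPN (neg_nonpos.mpr hsd)
  have step4 : P ^ (-(s / d)) = ∏ i, (max |(m i : ℝ)| 1) ^ (-(s / d)) := by
    rw [hP]
    exact (Real.finset_prod_rpow _ _ (fun i _ => le_trans zero_le_one (le_max_right _ _)) _).symm
  calc ‖latticePt A m‖ ^ (-s) ≤ (N / K) ^ (-s) := step1
  _ = K ^ s * N ^ (-s) := step2
  _ ≤ K ^ s * P ^ (-(s / d)) := mul_le_mul_of_nonneg_left step3 (by positivity)
  _ = _ := by rw [step4]

open Classical in
/-- An integer preimage of a point of the lattice. -/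
noncomputable def chooseVec {d : ℕ} (A : Matrix (Fin d) (Fin d) ℝ)
    (v : EuclideanSpace ℝ (Fin d)) : Fin d → ℤ :=
  if h : v ∈ lattice A then h.choose else 0

lemma latticePt_chooseVec {d : ℕ} {A : Matrix (Fin d) (Fin d) ℝ}
    {v : EuclideanSpace ℝ (Fin d)} (hv : v ∈ lattice A) :
    latticePt A (chooseVec A v) = v := by
  unfold chooseVec
  split
  · next h => exact h.choose_spec
  · next h => exact absurd hv h

/-- Integer chain point. -/
noncomputable def chainM {d : ℕ} (A : Matrix (Fin d) (Fin d) ℝ) (n : ℕ)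
    (x : Fin (n - 1) → EuclideanSpace ℝ (Fin d)) (j : ℕ) : Fin d → ℤ :=
  chooseVec A (chainPt n x j)

/-- The tuple of consecutive integer differences. -/
noncomputable def chainDiff {d : ℕ} (A : Matrix (Fin d) (Fin d) ℝ) (n : ℕ)
    (x : Fin (n - 1) → EuclideanSpace ℝ (Fin d)) (j : Fin (n - 1)) : Fin d → ℤ :=
  chainM A n x ((j : ℕ) + 1) - chainM A n x (j : ℕ)

lemma chainPt_mem {d n : ℕ} {A : Matrix (Fin d) (Fin d) ℝ}
    {x : Fin (n - 1) → EuclideanSpace ℝ (Fin d)} (hx : x ∈ nBodyDomain A n) (j : ℕ) :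
    chainPt n x j ∈ lattice A := by
  unfold chainPt
  split
  · exact hx.1 _
  · exact ⟨0, latticePt_zero A⟩

lemma latticePt_chainM {d n : ℕ} {A : Matrix (Fin d) (Fin d) ℝ}
    {x : Fin (n - 1) → EuclideanSpace ℝ (Fin d)} (hx : x ∈ nBodyDomain A n) (j : ℕ) :
    latticePt A (chainM A n x j) = chainPt n x j :=
  latticePt_chooseVec (chainPt_mem hx j)

lemma chainPt_inner {d n : ℕ} {x : Fin (n - 1) → EuclideanSpace ℝ (Fin d)}
    (i : Fin (n - 1)) : chainPt n x ((i : ℕ) + 1) = x i := by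
  have h : 0 < (i : ℕ) + 1 ∧ (i : ℕ) + 1 < n := by
    have := i.2; omega
  rw [chainPt, dif_pos h]
  exact congrArg x (Fin.ext (by simp))

lemma chainDiff_injective {d n : ℕ} {A : Matrix (Fin d) (Fin d) ℝ}
    (hAinj : Function.Injective (latticePt A))
    {x y : Fin (n - 1) → EuclideanSpace ℝ (Fin d)}
    (hx : x ∈ nBodyDomain A n) (hy : y ∈ nBodyDomain A n)
    (h : chainDiff A n x = chainDiff A n y) : x = y := by
  have key : ∀ k : ℕ, k ≤ n - 1 → chainM A n x k = chainM A n y k := by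
    intro k
    induction k with
    | zero =>
      intro _
      have h0 : ¬(0 < 0 ∧ 0 < n) := by omega
      simp only [chainM, chainPt, dif_neg h0]
    | succ k ih =>
      intro hk
      have hk' : k ≤ n - 1 := by omega
      have h1 : chainM A n x (k + 1) - chainM A n x k
          = chainM A n y (k + 1) - chainM A n y k := congrFun h ⟨k, by omega⟩
      have h2 := ih hk'
      rw [h2] at h1
      exact sub_left_inj.mp h1
  funext i
  have hkey := key ((i : ℕ) + 1) (by have := i.2; omega)
  calc x i = chainPt n x ((i : ℕ) + 1) := (chainPt_inner i).symm
  _ = latticePt A (chainM A n x ((i : ℕ) + 1)) := (latticePt_chainM hx _).symm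
  _ = latticePt A (chainM A n y ((i : ℕ) + 1)) := by rw [hkey]
  _ = chainPt n y ((i : ℕ) + 1) := latticePt_chainM hy _
  _ = y i := chainPt_inner i

/-- The comparison function. -/
noncomputable def compF {d k : ℕ} (K : ℝ) (t : Fin k → ℝ) (μ : Fin k → (Fin d → ℤ)) : ℝ :=
  ∏ j, (K ^ t j * ∏ i, (max |(μ j i : ℝ)| 1) ^ (-(t j / d)))

lemma compF_nonneg {d k : ℕ} {K : ℝ} (hK0 : 0 < K) (t : Fin k → ℝ)
    (μ : Fin k → (Fin d → ℤ)) : 0 ≤ compF K t μ := by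
  unfold compF
  refine Finset.prod_nonneg fun j _ => ?_
  have : (0:ℝ) ≤ ∏ i, (max |(μ j i : ℝ)| 1) ^ (-(t j / d)) :=
    Finset.prod_nonneg fun i _ => Real.rpow_nonneg (by positivity) _
  positivity

set_option maxHeartbeats 2000000 in
lemma compF_summable {d k : ℕ} (hd : 0 < d) {K : ℝ} (hK0 : 0 < K) {t : Fin k → ℝ}
    (ht : ∀ j, (d : ℝ) < t j) : Summable (compF (d := d) K t) := by
  show Summable fun μ : Fin k → (Fin d → ℤ) =>
    ∏ j, (K ^ t j * ∏ i, (max |(μ j i : ℝ)| 1) ^ (-(t j / d)))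
  refine aux_summable_pi_prod k
    (fun (j : Fin k) (m : Fin d → ℤ) => K ^ t j * ∏ i, (max |(m i : ℝ)| 1) ^ (-(t j / d))) ?_ ?_
  · intro j m
    have : (0:ℝ) ≤ ∏ i, (max |(m i : ℝ)| 1) ^ (-(t j / d)) :=
      Finset.prod_nonneg fun i _ => Real.rpow_nonneg (by positivity) _
    positivity
  · intro j
    refine Summable.mul_left _ (aux_summable_pi_prod d
      (fun (_ : Fin d) (z : ℤ) => (max |(z : ℝ)| 1) ^ (-(t j / d))) (fun i z => by positivity) fun i => ?_)
    apply aux_base_summable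
    have hd0 : (0:ℝ) < d := by exact_mod_cast hd
    rw [one_lt_div hd0]
    exact ht j

set_option maxHeartbeats 1000000 in
/-- For `Re ν_j > d` for all `j`, the `n`-body lattice sum converges
absolutely, so that the `n`-body zeta function is well-defined. -/
theorem nBody_summable (d n : ℕ) (hn : 1 ≤ n) (A : Matrix (Fin d) (Fin d) ℝ)
    (hA : IsUnit A.det) (ν : Fin n → ℂ) (hν : ∀ j, (d : ℝ) < (ν j).re) :
    Summable fun x : nBodyDomain A n => ‖nBodySummand n ν x.1‖ := by
  rcases Nat.eq_zero_or_pos d with hd | hd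
  · subst hd
    have : IsEmpty (nBodyDomain A n) := by
      constructor
      rintro ⟨x, hx1, hx2⟩
      exact (hx2 ⟨0, hn⟩) (Subsingleton.elim _ _)
    haveI : Fintype (nBodyDomain A n) := @Fintype.ofIsEmpty _ this
    exact Summable.of_finite
  obtain ⟨K, hK0, hKm⟩ := aux_exists_lattice_bound A hA
  have hd0 : (0 : ℝ) < d := by exact_mod_cast hd
  have hAinj := aux_latticePt_injective A hA
  have hnn1 : n - 1 ≤ n := by omega
  have he : n - 1 + 1 = n := by omega
  have hjl : n - 1 < n := by omega
  -- injectivity of the difference map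
  have hinj : Function.Injective (fun x : nBodyDomain A n => chainDiff A n x.1) := by
    intro x y h
    exact Subtype.ext (chainDiff_injective hAinj x.2 y.2 h)
  -- summability of the comparison function
  have hFsummable : Summable (fun μ : Fin (n - 1) → (Fin d → ℤ) =>
      K ^ (ν (⟨n - 1, hjl⟩ : Fin n)).re *
        compF K (fun j : Fin (n - 1) => (ν (Fin.castLE hnn1 j)).re) μ) :=
    (compF_summable hd hK0 fun j => hν (Fin.castLE hnn1 j)).mul_left _
  refine Summable.of_nonneg_of_le (fun x => norm_nonneg _) ?_
    (hFsummable.comp_injective hinj)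
  -- pointwise bound
  intro x
  show ‖nBodySummand n ν x.1‖ ≤ K ^ (ν (⟨n - 1, hjl⟩ : Fin n)).re *
      compF K (fun j : Fin (n - 1) => (ν (Fin.castLE hnn1 j)).re) (chainDiff A n x.1)
  -- nonzero differences
  have hdiffeq : ∀ j : Fin n,
      chainPt n x.1 ((j : ℕ) + 1) - chainPt n x.1 (j : ℕ)
        = latticePt A (chainM A n x.1 ((j : ℕ) + 1) - chainM A n x.1 (j : ℕ)) := by
    intro j
    rw [latticePt_sub, latticePt_chainM x.2, latticePt_chainM x.2]
  have hdiffne : ∀ j : Fin n,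
      chainM A n x.1 ((j : ℕ) + 1) - chainM A n x.1 (j : ℕ) ≠ 0 := by
    intro j h0
    apply x.2.2 j
    have h1 := hdiffeq j
    rw [h0, latticePt_zero] at h1
    exact sub_eq_zero.mp h1
  have ha0 : ∀ j : Fin n, (0:ℝ) ≤
      ‖chainPt n x.1 ((j : ℕ) + 1) - chainPt n x.1 (j : ℕ)‖ ^ (-(ν j).re) :=
    fun j => Real.rpow_nonneg (norm_nonneg _) _
  have hnorm : ‖nBodySummand n ν x.1‖ = ∏ j : Fin n,
      ‖chainPt n x.1 ((j : ℕ) + 1) - chainPt n x.1 (j : ℕ)‖ ^ (-(ν j).re) := by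
    rw [nBodySummand, norm_prod]
    refine Finset.prod_congr rfl fun j _ => ?_
    have hjpos : 0 < ‖chainPt n x.1 ((j : ℕ) + 1) - chainPt n x.1 (j : ℕ)‖ :=
      norm_pos_iff.mpr (sub_ne_zero_of_ne (x.2.2 j))
    rw [Complex.norm_cpow_eq_rpow_re_of_pos hjpos]
    simp
  have hprodsplit : ∏ j : Fin n,
      ‖chainPt n x.1 ((j : ℕ) + 1) - chainPt n x.1 (j : ℕ)‖ ^ (-(ν j).re)
      = (∏ j : Fin (n - 1),
          ‖chainPt n x.1 ((Fin.castLE hnn1 j : ℕ) + 1)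
            - chainPt n x.1 ((Fin.castLE hnn1 j : ℕ))‖ ^ (-(ν (Fin.castLE hnn1 j)).re))
        * ‖chainPt n x.1 (((⟨n - 1, hjl⟩ : Fin n) : ℕ) + 1)
            - chainPt n x.1 (((⟨n - 1, hjl⟩ : Fin n) : ℕ))‖
            ^ (-(ν (⟨n - 1, hjl⟩ : Fin n)).re) := by
    set a : Fin n → ℝ := fun j =>
      ‖chainPt n x.1 ((j : ℕ) + 1) - chainPt n x.1 (j : ℕ)‖ ^ (-(ν j).re) with haa
    rw [← Fintype.prod_equiv (finCongr he) (fun j => a (finCongr he j)) a fun j => rfl]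
    rw [Fin.prod_univ_castSucc]
    rfl
  have hbound1 : ∀ j : Fin (n - 1),
      ‖chainPt n x.1 ((Fin.castLE hnn1 j : ℕ) + 1)
        - chainPt n x.1 ((Fin.castLE hnn1 j : ℕ))‖ ^ (-(ν (Fin.castLE hnn1 j)).re)
      ≤ K ^ (ν (Fin.castLE hnn1 j)).re *
          ∏ i, (max |(chainDiff A n x.1 j i : ℝ)| 1)
            ^ (-((ν (Fin.castLE hnn1 j)).re / d)) := by
    intro j
    rw [hdiffeq (Fin.castLE hnn1 j)]
    exact aux_factor_bound hd hK0 hKm (hdiffne (Fin.castLE hnn1 j))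
      (le_trans hd0.le (hν _).le)
  have hbound2 :
      ‖chainPt n x.1 (((⟨n - 1, hjl⟩ : Fin n) : ℕ) + 1)
        - chainPt n x.1 (((⟨n - 1, hjl⟩ : Fin n) : ℕ))‖ ^ (-(ν (⟨n - 1, hjl⟩ : Fin n)).re)
      ≤ K ^ (ν (⟨n - 1, hjl⟩ : Fin n)).re := by
    have h1 : 1 / K ≤ ‖chainPt n x.1 (((⟨n - 1, hjl⟩ : Fin n) : ℕ) + 1)
        - chainPt n x.1 (((⟨n - 1, hjl⟩ : Fin n) : ℕ))‖ := by
      rw [hdiffeq ⟨n - 1, hjl⟩]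
      exact aux_lattice_norm_lb hK0 hKm (hdiffne ⟨n - 1, hjl⟩)
    calc ‖chainPt n x.1 (((⟨n - 1, hjl⟩ : Fin n) : ℕ) + 1)
        - chainPt n x.1 (((⟨n - 1, hjl⟩ : Fin n) : ℕ))‖ ^ (-(ν (⟨n - 1, hjl⟩ : Fin n)).re)
        ≤ (1 / K) ^ (-(ν (⟨n - 1, hjl⟩ : Fin n)).re) :=
          Real.rpow_le_rpow_of_nonpos (by positivity) h1
            (neg_nonpos.mpr (le_trans hd0.le (hν _).le))
    _ = K ^ (ν (⟨n - 1, hjl⟩ : Fin n)).re := by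
          rw [one_div, Real.inv_rpow hK0.le, Real.rpow_neg hK0.le, inv_inv]
  rw [hnorm, hprodsplit, mul_comm (K ^ (ν (⟨n - 1, hjl⟩ : Fin n)).re)]
  unfold compF
  apply mul_le_mul _ hbound2 (Real.rpow_nonneg (norm_nonneg _) _)
    (Finset.prod_nonneg fun j _ => ?_)
  · exact Finset.prod_le_prod (fun j _ => Real.rpow_nonneg (norm_nonneg _) _)
      (fun j _ => hbound1 j)
  · have : (0:ℝ) ≤ ∏ i, (max |(chainDiff A n x.1 j i : ℝ)| 1)
        ^ (-((ν (Fin.castLE hnn1 j)).re / d)) :=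
      Finset.prod_nonneg fun i _ => Real.rpow_nonneg (by positivity) _
    positivity
end

section
/- Let Λ = Aℤ^d be a Bravais lattice with A ∈ ℝ^{d×d} invertible, let V_Λ = |det A|, let BZ = A^{-T}(−1/2,1/2)^d, and let ν₁, ν₂ ∈ ℂ with Re(ν₁) > d and Re(ν₂) > d. Then V_Λ ∫_{BZ} Z_{Λ,ν₁}(k) Z_{Λ,ν₂}(k) dk = Z_{Λ,ν₁+ν₂}(0), i.e. the two-body zeta function reduces to the Epstein zeta function with exponent ν₁ + ν₂ evaluated at k = 0. -/
open MeasureTheory Complex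
open scoped Real InnerProductSpace

/-- The Brillouin zone `BZ = A^{-T} (-1/2, 1/2)^d`. -/
noncomputable def brillouinZone {d : ℕ} (A : Matrix (Fin d) (Fin d) ℝ) :
    Set (EuclideanSpace ℝ (Fin d)) :=
  (fun p : Fin d → ℝ => (WithLp.toLp 2 ((A.transpose)⁻¹.mulVec p) : EuclideanSpace ℝ (Fin d))) ''
    Set.univ.pi fun _ => Set.Ioo (-(1/2) : ℝ) (1/2)

/-- The Epstein zeta function `Z_{Λ,ν}(k) = ∑_{z ∈ Λ, z ≠ 0} e^{-2πi z·k} / |z|^ν`. -/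
noncomputable def epsteinZeta {d : ℕ} (A : Matrix (Fin d) (Fin d) ℝ) (ν : ℂ)
    (k : EuclideanSpace ℝ (Fin d)) : ℂ :=
  ∑' z : {z : EuclideanSpace ℝ (Fin d) // z ∈ lattice A ∧ z ≠ 0},
    Complex.exp (-(2 * (π : ℂ) * Complex.I) * (⟪z.1, k⟫_ℝ : ℂ)) / (‖z.1‖ : ℂ) ^ ν

/-! ### Auxiliary lemmas -/

section Aux

variable {d : ℕ} {A : Matrix (Fin d) (Fin d) ℝ}

lemma bz_sumA {t : ℝ} (ht : 1 < t) : Summable fun n : ℤ => (max 1 |(n : ℝ)|) ^ (-t) := by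
  have h1 := Real.summable_abs_int_rpow ht
  have h2 : Summable fun n : ℤ => if n = 0 then (1:ℝ) else 0 :=
    summable_of_ne_finset_zero (s := {0}) (by intro b hb; simp at hb; simp [hb])
  apply (h1.add h2).congr
  intro n
  rcases eq_or_ne n 0 with rfl | hn
  · simp [Real.zero_rpow (by linarith : -t ≠ 0)]
  · have : (1:ℝ) ≤ |(n:ℝ)| := by
      rw [← Int.cast_abs]; exact_mod_cast Int.one_le_abs (by simpa using hn)
    simp [hn, max_eq_right this]

lemma bz_sumB {f : ℤ → ℝ} (hf : Summable f) (h0 : ∀ n, 0 ≤ f n) (d : ℕ) :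
    Summable fun m : Fin d → ℤ => ∏ j, f (m j) := by
  induction d with
  | zero => exact .of_finite
  | succ n ih =>
    have h := ((hf.mul_of_nonneg ih h0 (fun m => Finset.prod_nonneg fun j _ => h0 _)))
    rw [← (Fin.consEquiv fun _ : Fin (n+1) => ℤ).summable_iff
      (f := fun m : Fin (n+1) → ℤ => ∏ j, f (m j))]
    apply h.congr
    intro ⟨a, b⟩
    simp [Fin.consEquiv, Fin.prod_univ_succ]

lemma bz_sumC (A : Matrix (Fin d) (Fin d) ℝ) (hA : IsUnit A.det) :
    ∃ C > (0:ℝ), ∀ m : Fin d → ℤ, ‖(fun j => (m j : ℝ))‖ ≤ C * ‖latticePt A m‖ := by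
  classical
  let L0 : EuclideanSpace ℝ (Fin d) →ₗ[ℝ] (Fin d → ℝ) :=
    (Matrix.mulVecLin A⁻¹).comp (WithLp.linearEquiv 2 ℝ (Fin d → ℝ)).toLinearMap
  let L := LinearMap.toContinuousLinearMap L0
  refine ⟨‖L‖ + 1, by positivity, fun m => ?_⟩
  have key : L (latticePt A m) = fun j => (m j : ℝ) := by
    show A⁻¹.mulVec (WithLp.ofLp (WithLp.toLp 2 (A.mulVec fun j => (m j : ℝ)))) = _
    rw [WithLp.ofLp_toLp, Matrix.mulVec_mulVec, Matrix.nonsing_inv_mul A hA, Matrix.one_mulVec]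
  calc ‖(fun j => (m j : ℝ))‖ = ‖L (latticePt A m)‖ := by rw [key]
    _ ≤ ‖L‖ * ‖latticePt A m‖ := L.le_opNorm _
    _ ≤ (‖L‖ + 1) * ‖latticePt A m‖ := by
        apply mul_le_mul_of_nonneg_right (by linarith) (norm_nonneg _)

lemma latticePt_ne_zero (hA : IsUnit A.det)
    {m : Fin d → ℤ} (hm : m ≠ 0) : latticePt A m ≠ 0 := by
  obtain ⟨C, hC, hb⟩ := bz_sumC A hA
  intro h
  apply hm
  have := hb m
  rw [h, norm_zero, mul_zero, norm_le_zero_iff] at this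
  funext j
  have h2 : (fun j => ((m j : ℝ))) j = 0 := by rw [this]; rfl
  simp only at h2
  exact_mod_cast h2

lemma bz_sumD (A : Matrix (Fin d) (Fin d) ℝ) (hA : IsUnit A.det) {s : ℝ}
    (hs : (d:ℝ) < s) :
    Summable fun m : {m : Fin d → ℤ // m ≠ 0} => ‖latticePt A m.1‖ ^ (-s) := by
  rcases Nat.eq_zero_or_pos d with rfl | hd
  · have : IsEmpty {m : Fin 0 → ℤ // m ≠ 0} := by
      constructor; rintro ⟨m, hm⟩; exact hm (funext fun j => absurd j.2 (by omega))
    exact .of_finite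
  obtain ⟨C, hC, hb⟩ := bz_sumC A hA
  have hd1 : (1:ℝ) ≤ d := by exact_mod_cast hd
  have hs0 : 0 < s := by linarith
  set t := s / d with hts
  have ht : 1 < t := (lt_div_iff₀ (by positivity)).mpr (by linarith)
  have hmaj := ((bz_sumB (bz_sumA ht)
    (fun n => Real.rpow_nonneg (le_max_iff.mpr (Or.inl zero_le_one)) _) d).mul_left
      (C ^ s)).subtype {m : Fin d → ℤ | m ≠ 0}
  apply Summable.of_nonneg_of_le (fun m => Real.rpow_nonneg (norm_nonneg _) _) ?_ hmaj
  rintro ⟨m, hm⟩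
  have hmR : (fun j => (m j : ℝ)) ≠ 0 := by
    intro h; apply hm; funext j
    have := congrFun h j; simpa using this
  have hmpos : 0 < ‖(fun j => (m j : ℝ))‖ := norm_pos_iff.mpr hmR
  have hlpos : 0 < ‖latticePt A m‖ :=
    norm_pos_iff.mpr (latticePt_ne_zero hA hm)
  have h1m : (1:ℝ) ≤ ‖(fun j => (m j : ℝ))‖ := by
    obtain ⟨j, hj⟩ : ∃ j, m j ≠ 0 := by
      by_contra h; push_neg at h; exact hm (funext h)
    calc (1:ℝ) ≤ |(m j : ℝ)| := by
          rw [← Int.cast_abs]; exact_mod_cast Int.one_le_abs hj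
      _ ≤ ‖(fun j => (m j : ℝ))‖ := by
          simpa [Real.norm_eq_abs] using norm_le_pi_norm (fun j => (m j : ℝ)) j
  have step1 : ‖latticePt A m‖ ^ (-s) ≤ C ^ s * ‖(fun j => (m j : ℝ))‖ ^ (-s) := by
    have hx : 0 < ‖(fun j => (m j : ℝ))‖ / C := by positivity
    have : ‖(fun j => (m j : ℝ))‖ / C ≤ ‖latticePt A m‖ :=
      (div_le_iff₀' hC).mpr (hb m)
    calc ‖latticePt A m‖ ^ (-s) ≤ (‖(fun j => (m j : ℝ))‖ / C) ^ (-s) :=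
          (Real.rpow_le_rpow_iff_of_neg hlpos hx (by linarith)).mpr this
      _ = C ^ s * ‖(fun j => (m j : ℝ))‖ ^ (-s) := by
          rw [Real.div_rpow (norm_nonneg _) hC.le, Real.rpow_neg hC.le, div_eq_mul_inv,
            inv_inv, mul_comm]
  have step2 : ‖(fun j => (m j : ℝ))‖ ^ (-s) ≤ ∏ j, (max 1 |(m j : ℝ)|) ^ (-t) := by
    have hprod : ∏ j, (max 1 |(m j : ℝ)|) ≤ ‖(fun j => (m j : ℝ))‖ ^ (d:ℕ) := by
      calc ∏ j, (max 1 |(m j : ℝ)|) ≤ ∏ _j : Fin d, ‖(fun j => (m j : ℝ))‖ := by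
            apply Finset.prod_le_prod (fun j _ => by positivity)
            intro j _
            apply max_le h1m
            simpa [Real.norm_eq_abs] using norm_le_pi_norm (fun j => (m j : ℝ)) j
        _ = ‖(fun j => (m j : ℝ))‖ ^ (d:ℕ) := by simp
    have hppos : 0 < ∏ j, (max 1 |(m j : ℝ)|) :=
      Finset.prod_pos fun j _ => lt_of_lt_of_le one_pos (le_max_left _ _) |>.trans_le le_rfl
    calc ‖(fun j => (m j : ℝ))‖ ^ (-s)
        = (‖(fun j => (m j : ℝ))‖ ^ (d:ℕ)) ^ (-t) := by
          have hdt : (d:ℝ) * -t = -s := by rw [hts]; field_simp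
          rw [← Real.rpow_natCast _ d, ← Real.rpow_mul (norm_nonneg _), hdt]
      _ ≤ (∏ j, (max 1 |(m j : ℝ)|)) ^ (-t) := by
          exact (Real.rpow_le_rpow_iff_of_neg (by positivity) hppos (by linarith)).mpr hprod
      _ = ∏ j, (max 1 |(m j : ℝ)|) ^ (-t) := by
          rw [← Real.finset_prod_rpow _ _ (fun j _ => by positivity)]
  calc ‖latticePt A m‖ ^ (-s) ≤ C ^ s * ‖(fun j => (m j : ℝ))‖ ^ (-s) := step1
    _ ≤ C ^ s * ∏ j, (max 1 |(m j : ℝ)|) ^ (-t) := by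
        apply mul_le_mul_of_nonneg_left step2 (by positivity)

lemma latticePt_inj (hA : IsUnit A.det) : Function.Injective (latticePt A) := by
  intro m m' h
  have h2 : latticePt A (m - m') = 0 := by
    show WithLp.toLp 2 (A.mulVec _) = _
    have : (fun j => ((m - m') j : ℝ)) = (fun j => (m j : ℝ)) - fun j => (m' j : ℝ) := by
      funext j; simp
    rw [this, Matrix.mulVec_sub, WithLp.toLp_sub]
    exact sub_eq_zero_of_eq h
  by_contra hne
  exact latticePt_ne_zero hA (sub_ne_zero_of_ne hne) h2

noncomputable def latEquiv (hA : IsUnit A.det) :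
    {m : Fin d → ℤ // m ≠ 0} ≃ {z : EuclideanSpace ℝ (Fin d) // z ∈ lattice A ∧ z ≠ 0} := by
  apply Equiv.ofBijective
    (fun m => ⟨latticePt A m.1, ⟨m.1, rfl⟩, latticePt_ne_zero hA m.2⟩)
  constructor
  · rintro ⟨m, hm⟩ ⟨m', hm'⟩ h
    simpa using latticePt_inj hA (congrArg Subtype.val h)
  · rintro ⟨z, ⟨m, rfl⟩, hz⟩
    refine ⟨⟨m, fun h => hz ?_⟩, rfl⟩
    rw [h]; show WithLp.toLp 2 (A.mulVec _) = 0
    have : (fun j => ((0 : Fin d → ℤ) j : ℝ)) = 0 := by funext j; simp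
    rw [this, Matrix.mulVec_zero, WithLp.toLp_zero]

lemma epsteinZeta_eq (hA : IsUnit A.det) (ν : ℂ) (k : EuclideanSpace ℝ (Fin d)) :
    epsteinZeta A ν k = ∑' m : {m : Fin d → ℤ // m ≠ 0},
      Complex.exp (-(2 * (π : ℂ) * Complex.I) * (⟪latticePt A m.1, k⟫_ℝ : ℂ)) /
        (‖latticePt A m.1‖ : ℂ) ^ ν :=
  ((latEquiv hA).tsum_eq _).symm

lemma bz_norm_term {x : ℝ} (hx : 0 < x) (r : ℝ) (ν : ℂ) :
    ‖Complex.exp (-(2 * (π : ℂ) * Complex.I) * (r : ℂ)) / (x : ℂ) ^ ν‖ = x ^ (-ν.re) := by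
  rw [norm_div, Complex.norm_exp,
    Complex.norm_cpow_eq_rpow_re_of_pos hx]
  have : (-(2 * (π : ℂ) * Complex.I) * (r : ℂ)).re = 0 := by
    simp [Complex.mul_re]
  rw [this, Real.exp_zero, Real.rpow_neg hx.le, one_div]

/-- The unit cube, as a subset of Euclidean space. -/
abbrev cubeS (d : ℕ) : Set (EuclideanSpace ℝ (Fin d)) :=
  (MeasurableEquiv.toLp 2 (Fin d → ℝ)).symm ⁻¹' (Set.univ.pi fun _ => Set.Ioo (-(1/2) : ℝ) (1/2))

/-- The linear change-of-variables map. -/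
noncomputable def covL {d : ℕ} (A : Matrix (Fin d) (Fin d) ℝ) :
    EuclideanSpace ℝ (Fin d) →L[ℝ] EuclideanSpace ℝ (Fin d) :=
  LinearMap.toContinuousLinearMap (Matrix.toEuclideanLin (A.transpose)⁻¹)

lemma bz_eq (A : Matrix (Fin d) (Fin d) ℝ) : brillouinZone A = (covL A) '' cubeS d := by
  ext z; constructor
  · rintro ⟨p, hp, rfl⟩; exact ⟨WithLp.toLp 2 p, hp, rfl⟩
  · rintro ⟨x, hx, rfl⟩; exact ⟨x.ofLp, hx, rfl⟩

lemma cubeS_meas (d : ℕ) : MeasurableSet (cubeS d) :=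
  (MeasurableEquiv.toLp 2 (Fin d → ℝ)).symm.measurable
    (MeasurableSet.univ_pi fun _ => measurableSet_Ioo)

lemma cubeS_vol (d : ℕ) : volume (cubeS d) = 1 := by
  rw [(EuclideanSpace.volume_preserving_symm_measurableEquiv_toLp (Fin d)).measure_preimage
    ((MeasurableSet.univ_pi fun _ => measurableSet_Ioo).nullMeasurableSet)]
  rw [volume_pi_pi]
  simp [Real.volume_Ioo]
  norm_num

lemma covL_det (A : Matrix (Fin d) (Fin d) ℝ) : (covL A).det = ((A.transpose)⁻¹).det := by
  have h1 : ((covL A : EuclideanSpace ℝ (Fin d) →L[ℝ] EuclideanSpace ℝ (Fin d)) :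
      EuclideanSpace ℝ (Fin d) →ₗ[ℝ] EuclideanSpace ℝ (Fin d)) =
      Matrix.toEuclideanLin (A.transpose)⁻¹ := LinearMap.coe_toContinuousLinearMap _
  rw [ContinuousLinearMap.det, h1]
  have h2 : Matrix.toEuclideanLin (A.transpose)⁻¹ =
      (((WithLp.linearEquiv 2 ℝ (Fin d → ℝ)).symm :
          (Fin d → ℝ) →ₗ[ℝ] EuclideanSpace ℝ (Fin d)) ∘ₗ (Matrix.toLin' (A.transpose)⁻¹) ∘ₗ
        (((WithLp.linearEquiv 2 ℝ (Fin d → ℝ)).symm.symm :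
          EuclideanSpace ℝ (Fin d) →ₗ[ℝ] (Fin d → ℝ)))) := rfl
  rw [h2, LinearMap.det_conj, LinearMap.det_toLin']

lemma bz_int1d (n : ℤ) :
    ∫ t in Set.Ioo (-(1/2) : ℝ) (1/2), Complex.exp (-(2 * (π : ℂ) * Complex.I) * (n : ℂ) * t) =
      if n = 0 then 1 else 0 := by
  rcases eq_or_ne n 0 with rfl | hn
  · simp [setIntegral_const, Real.volume_Ioo]
    norm_num
  · rw [if_neg hn, ← integral_Ioc_eq_integral_Ioo,
      ← intervalIntegral.integral_of_le (by norm_num : (-(1/2):ℝ) ≤ 1/2)]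
    have hc : (-(2 * (π : ℂ) * Complex.I) * (n : ℂ)) ≠ 0 := by
      simp [Real.pi_ne_zero, Complex.I_ne_zero, hn]
    rw [show (fun t : ℝ => Complex.exp (-(2 * (π : ℂ) * Complex.I) * (n : ℂ) * t)) =
      (fun t : ℝ => Complex.exp ((-(2 * (π : ℂ) * Complex.I) * (n : ℂ)) * t)) from rfl]
    rw [integral_exp_mul_complex hc]
    set c := -(2 * (π : ℂ) * Complex.I) * (n : ℂ)
    have hce : Complex.exp c = 1 := by
      show Complex.exp (-(2 * (π : ℂ) * Complex.I) * (n : ℂ)) = 1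
      rw [show -(2 * (π : ℂ) * Complex.I) * (n : ℂ) = ((-n : ℤ) : ℂ) * (2 * π * Complex.I) by
        push_cast; ring]
      exact Complex.exp_int_mul_two_pi_mul_I (-n)
    have key : Complex.exp (c * ((1/2:ℝ):ℂ)) = Complex.exp (c * ((-(1/2):ℝ):ℂ)) := by
      rw [show (c * ((1/2:ℝ):ℂ)) = c + c * ((-(1/2):ℝ):ℂ) by push_cast; ring,
        Complex.exp_add, hce, one_mul]
    rw [key, sub_self, zero_div]

lemma bz_indicator_pi {d : ℕ} (s : Fin d → Set ℝ) (h : Fin d → ℝ → ℂ) (p : Fin d → ℝ) :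
    (Set.univ.pi s).indicator (fun q => ∏ j, h j (q j)) p =
      ∏ j, (s j).indicator (h j) (p j) := by
  by_cases hp : p ∈ Set.univ.pi s
  · rw [Set.indicator_of_mem hp]
    exact Finset.prod_congr rfl fun j _ =>
      (Set.indicator_of_mem (hp j trivial) _).symm
  · rw [Set.indicator_of_notMem hp]
    rw [Set.mem_pi] at hp
    push_neg at hp
    obtain ⟨j, -, hj⟩ := hp
    symm
    exact Finset.prod_eq_zero (Finset.mem_univ j) (Set.indicator_of_notMem hj _)

lemma bz_intCube {d : ℕ} (n : Fin d → ℤ) :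
    ∫ x in cubeS d, Complex.exp (-(2 * (π : ℂ) * Complex.I) *
        ((∑ j, (n j : ℝ) * x j : ℝ) : ℂ)) = if n = 0 then 1 else 0 := by
  have htrans := (EuclideanSpace.volume_preserving_symm_measurableEquiv_toLp (Fin d)).setIntegral_preimage_emb
    (MeasurableEquiv.toLp 2 (Fin d → ℝ)).symm.measurableEmbedding
    (fun p : Fin d → ℝ => Complex.exp (-(2 * (π : ℂ) * Complex.I) *
      ((∑ j, (n j : ℝ) * p j : ℝ) : ℂ)))
    (Set.univ.pi fun _ => Set.Ioo (-(1/2) : ℝ) (1/2))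
  rw [show (∫ x in cubeS d, Complex.exp (-(2 * (π : ℂ) * Complex.I) *
      ((∑ j, (n j : ℝ) * x j : ℝ) : ℂ))) =
      ∫ x in cubeS d, (fun p : Fin d → ℝ => Complex.exp (-(2 * (π : ℂ) * Complex.I) *
        ((∑ j, (n j : ℝ) * p j : ℝ) : ℂ))) ((MeasurableEquiv.toLp 2 (Fin d → ℝ)).symm x) from rfl,
    htrans]
  have hsplit : ∀ p : Fin d → ℝ, Complex.exp (-(2 * (π : ℂ) * Complex.I) *
      ((∑ j, (n j : ℝ) * p j : ℝ) : ℂ)) =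
      ∏ j, Complex.exp (-(2 * (π : ℂ) * Complex.I) * ((n j : ℂ)) * ((p j : ℝ) : ℂ)) := by
    intro p
    rw [← Complex.exp_sum]
    congr 1
    push_cast
    rw [Finset.mul_sum]
    exact Finset.sum_congr rfl fun j _ => by ring
  simp_rw [hsplit]
  rw [← integral_indicator (MeasurableSet.univ_pi fun _ => measurableSet_Ioo)]
  have : ∀ p : Fin d → ℝ, (Set.univ.pi fun _ => Set.Ioo (-(1/2) : ℝ) (1/2)).indicator
      (fun q => ∏ j, Complex.exp (-(2 * (π : ℂ) * Complex.I) * ((n j : ℂ)) * ((q j : ℝ) : ℂ))) p =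
      ∏ j, (Set.Ioo (-(1/2) : ℝ) (1/2)).indicator
        (fun t => Complex.exp (-(2 * (π : ℂ) * Complex.I) * ((n j : ℂ)) * ((t : ℝ) : ℂ))) (p j) :=
    fun p => bz_indicator_pi (fun _ => Set.Ioo (-(1/2) : ℝ) (1/2))
      (fun j t => Complex.exp (-(2 * (π : ℂ) * Complex.I) * ((n j : ℂ)) * ((t : ℝ) : ℂ))) p
  simp_rw [this]
  rw [MeasureTheory.integral_fintype_prod_volume_eq_prod
    (f := fun j t => (Set.Ioo (-(1/2) : ℝ) (1/2)).indicator
      (fun t => Complex.exp (-(2 * (π : ℂ) * Complex.I) * ((n j : ℂ)) * ((t : ℝ) : ℂ))) t)]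
  have heach : ∀ j, (∫ t : ℝ, (Set.Ioo (-(1/2) : ℝ) (1/2)).indicator
      (fun t => Complex.exp (-(2 * (π : ℂ) * Complex.I) * ((n j : ℂ)) * ((t : ℝ) : ℂ))) t) =
      if n j = 0 then 1 else 0 := by
    intro j
    rw [integral_indicator measurableSet_Ioo]
    exact bz_int1d (n j)
  simp_rw [heach]
  rcases eq_or_ne n 0 with rfl | hn
  · simp
  · rw [if_neg hn]
    obtain ⟨j, hj⟩ : ∃ j, n j ≠ 0 := by
      by_contra h; push_neg at h; exact hn (funext h)
    exact Finset.prod_eq_zero (Finset.mem_univ j) (if_neg hj)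

lemma inner_lat_cov (hA : IsUnit A.det)
    (m : Fin d → ℤ) (x : EuclideanSpace ℝ (Fin d)) :
    ⟪latticePt A m, covL A x⟫_ℝ = ∑ j, (m j : ℝ) * x j := by
  have hAT : IsUnit A.transpose.det := by rwa [Matrix.det_transpose]
  have : ⟪latticePt A m, covL A x⟫_ℝ =
      dotProduct (A.mulVec fun j => (m j : ℝ)) ((A.transpose)⁻¹.mulVec fun j => x j) := by
    rw [PiLp.inner_apply]
    simp only [Real.inner_apply]
    rfl
  rw [this, Matrix.dotProduct_mulVec, ← Matrix.vecMul_transpose,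
    Matrix.vecMul_vecMul, Matrix.mul_nonsing_inv _ hAT, Matrix.vecMul_one]
  rfl

end Aux

/-- For `Re ν₁ > d` and `Re ν₂ > d`,
`V_Λ ∫_BZ Z_{Λ,ν₁}(k) Z_{Λ,ν₂}(k) dk = Z_{Λ,ν₁+ν₂}(0)`. -/
theorem twoBodyZeta_eq_epsteinZeta (d : ℕ) (A : Matrix (Fin d) (Fin d) ℝ)
    (hA : IsUnit A.det) (ν₁ ν₂ : ℂ) (hν₁ : (d : ℝ) < ν₁.re) (hν₂ : (d : ℝ) < ν₂.re) :
    ((|A.det| : ℝ) : ℂ) *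
        ∫ k in brillouinZone A, epsteinZeta A ν₁ k * epsteinZeta A ν₂ k =
      epsteinZeta A (ν₁ + ν₂) 0 := by
  classical
  have hAT : IsUnit A.transpose.det := by rwa [Matrix.det_transpose]
  have hdet0 : A.det ≠ 0 := hA.ne_zero
  -- change of variables
  have hinj : Function.Injective (covL A) := by
    have hli : Function.LeftInverse
        (fun x : EuclideanSpace ℝ (Fin d) => (WithLp.toLp 2 (A.transpose.mulVec x) : EuclideanSpace ℝ (Fin d)))
        (covL A) := by
      intro x
      show WithLp.toLp 2 (A.transpose.mulVec (WithLp.ofLp (WithLp.toLp 2 ((A.transpose)⁻¹.mulVec (WithLp.ofLp x))))) = x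
      rw [WithLp.ofLp_toLp, Matrix.mulVec_mulVec, Matrix.mul_nonsing_inv _ hAT, Matrix.one_mulVec,
        WithLp.toLp_ofLp]
    exact hli.injective
  have hcv : (∫ k in brillouinZone A, epsteinZeta A ν₁ k * epsteinZeta A ν₂ k) =
      ∫ x in cubeS d, |(covL A).det| •
        (epsteinZeta A ν₁ (covL A x) * epsteinZeta A ν₂ (covL A x)) := by
    rw [bz_eq]
    exact integral_image_eq_integral_abs_det_fderiv_smul volume (cubeS_meas d)
      (fun x _ => (covL A).hasFDerivAt.hasFDerivWithinAt) hinj.injOn _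
  have habs : |(covL A).det| = |A.det|⁻¹ := by
    rw [covL_det, Matrix.det_nonsing_inv, Matrix.det_transpose, Ring.inverse_eq_inv, abs_inv]
  rw [hcv]
  simp only [habs]
  rw [integral_smul, Complex.real_smul, ← mul_assoc, ← Complex.ofReal_mul,
    mul_inv_cancel₀ (abs_ne_zero.mpr hdet0), Complex.ofReal_one, one_mul]
  -- notation
  set c : ℂ := -(2 * (π : ℂ) * Complex.I) with hc
  have hrpos : ∀ m : {m : Fin d → ℤ // m ≠ 0}, 0 < ‖latticePt A m.1‖ :=
    fun m => norm_pos_iff.mpr (latticePt_ne_zero hA m.2)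
  set T : ℂ → {m : Fin d → ℤ // m ≠ 0} → EuclideanSpace ℝ (Fin d) → ℂ :=
    fun ν m x => Complex.exp (c * ((∑ j, (m.1 j : ℝ) * x j : ℝ) : ℂ)) /
      (‖latticePt A m.1‖ : ℂ) ^ ν with hT
  have hZ : ∀ (ν : ℂ) x, epsteinZeta A ν (covL A x) = ∑' m : {m : Fin d → ℤ // m ≠ 0}, T ν m x := by
    intro ν x
    rw [epsteinZeta_eq hA]
    exact tsum_congr fun m => by rw [hT, inner_lat_cov hA]
  have hTnorm : ∀ (ν : ℂ) m x, ‖T ν m x‖ = ‖latticePt A m.1‖ ^ (-ν.re) :=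
    fun ν m x => bz_norm_term (hrpos m) _ ν
  have hsum1 : Summable fun m : {m : Fin d → ℤ // m ≠ 0} => ‖latticePt A m.1‖ ^ (-ν₁.re) :=
    bz_sumD A hA hν₁
  have hsum2 : Summable fun m : {m : Fin d → ℤ // m ≠ 0} => ‖latticePt A m.1‖ ^ (-ν₂.re) :=
    bz_sumD A hA hν₂
  set G : ({m : Fin d → ℤ // m ≠ 0} × {m : Fin d → ℤ // m ≠ 0}) →
      EuclideanSpace ℝ (Fin d) → ℂ := fun q x => T ν₁ q.1 x * T ν₂ q.2 x with hG
  have hexpand : ∀ x, epsteinZeta A ν₁ (covL A x) * epsteinZeta A ν₂ (covL A x) =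
      ∑' q : {m : Fin d → ℤ // m ≠ 0} × {m : Fin d → ℤ // m ≠ 0}, G q x := by
    intro x
    rw [hZ, hZ]
    exact tsum_mul_tsum_of_summable_norm
      (by simpa only [hTnorm] using hsum1) (by simpa only [hTnorm] using hsum2)
  have hGnorm : ∀ q x, ‖G q x‖ =
      ‖latticePt A q.1.1‖ ^ (-ν₁.re) * ‖latticePt A q.2.1‖ ^ (-ν₂.re) := by
    intro q x
    rw [hG, norm_mul, hTnorm, hTnorm]
  have hCsum : Summable fun q : {m : Fin d → ℤ // m ≠ 0} × {m : Fin d → ℤ // m ≠ 0} =>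
      ‖latticePt A q.1.1‖ ^ (-ν₁.re) * ‖latticePt A q.2.1‖ ^ (-ν₂.re) :=
    hsum1.mul_of_nonneg hsum2 (fun m => Real.rpow_nonneg (norm_nonneg _) _)
      (fun m => Real.rpow_nonneg (norm_nonneg _) _)
  -- continuity of the integrand
  have hGcont : ∀ q, Continuous (G q) := by
    intro q
    have hσ : ∀ m : Fin d → ℤ, Continuous fun x : EuclideanSpace ℝ (Fin d) =>
        (∑ j, (m j : ℝ) * x j : ℝ) := by
      intro m
      apply continuous_finset_sum
      intro j _
      exact continuous_const.mul ((PiLp.proj (𝕜 := ℝ) 2 (fun _ : Fin d => ℝ) j).continuous)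
    have hTc : ∀ (ν : ℂ) m, Continuous fun x => T ν m x := by
      intro ν m
      apply Continuous.div_const
      exact Complex.continuous_exp.comp
        (continuous_const.mul (Complex.continuous_ofReal.comp (hσ m.1)))
    exact (hTc ν₁ q.1).mul (hTc ν₂ q.2)
  haveI hfin : IsFiniteMeasure (volume.restrict (cubeS d)) := by
    constructor
    rw [Measure.restrict_apply_univ, cubeS_vol]
    exact ENNReal.one_lt_top
  have hInt : ∀ q, Integrable (G q) (volume.restrict (cubeS d)) := by
    intro q
    apply (integrable_const (‖latticePt A q.1.1‖ ^ (-ν₁.re) *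
      ‖latticePt A q.2.1‖ ^ (-ν₂.re))).mono' (hGcont q).aestronglyMeasurable
    exact ae_of_all _ fun x => le_of_eq (hGnorm q x)
  have hSumInt : Summable fun q : {m : Fin d → ℤ // m ≠ 0} × {m : Fin d → ℤ // m ≠ 0} =>
      ∫ x in cubeS d, ‖G q x‖ := by
    apply hCsum.congr
    intro q
    simp_rw [hGnorm q]
    rw [setIntegral_const, measureReal_def, cubeS_vol, ENNReal.toReal_one, one_smul]
  -- swap sum and integral
  have hswap : (∫ x in cubeS d,
        ∑' q : {m : Fin d → ℤ // m ≠ 0} × {m : Fin d → ℤ // m ≠ 0}, G q x) =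
      ∑' q : {m : Fin d → ℤ // m ≠ 0} × {m : Fin d → ℤ // m ≠ 0}, ∫ x in cubeS d, G q x :=
    (integral_tsum_of_summable_integral_norm hInt hSumInt).symm
  have hstep : (∫ x in cubeS d,
        epsteinZeta A ν₁ (covL A x) * epsteinZeta A ν₂ (covL A x)) =
      ∑' q : {m : Fin d → ℤ // m ≠ 0} × {m : Fin d → ℤ // m ≠ 0}, ∫ x in cubeS d, G q x := by
    rw [← hswap]
    exact integral_congr_ae (Filter.Eventually.of_forall fun x => hexpand x)
  rw [hstep]
  -- evaluate each integral
  have hIntG : ∀ q : {m : Fin d → ℤ // m ≠ 0} × {m : Fin d → ℤ // m ≠ 0},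
      (∫ x in cubeS d, G q x) = (if q.1.1 + q.2.1 = (0 : Fin d → ℤ) then 1 else 0) *
        ((‖latticePt A q.1.1‖ : ℂ) ^ ν₁ * (‖latticePt A q.2.1‖ : ℂ) ^ ν₂)⁻¹ := by
    intro q
    have hGr : ∀ x : EuclideanSpace ℝ (Fin d), G q x =
        Complex.exp (c * ((∑ j, ((q.1.1 + q.2.1) j : ℝ) * x j : ℝ) : ℂ)) *
          ((‖latticePt A q.1.1‖ : ℂ) ^ ν₁ * (‖latticePt A q.2.1‖ : ℂ) ^ ν₂)⁻¹ := by
      intro x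
      rw [hG, hT]
      simp only
      rw [div_mul_div_comm, ← Complex.exp_add, div_eq_mul_inv]
      congr 2
      rw [← mul_add]
      congr 1
      rw [← Complex.ofReal_add]
      congr 1
      rw [← Finset.sum_add_distrib]
      exact Finset.sum_congr rfl fun j _ => by
        simp only [Pi.add_apply]; push_cast; ring
    simp_rw [hGr]
    rw [integral_mul_const, bz_intCube (q.1.1 + q.2.1)]
  rw [tsum_congr hIntG]
  -- summability of the diagonal expression
  have hdiag : Summable fun q : {m : Fin d → ℤ // m ≠ 0} × {m : Fin d → ℤ // m ≠ 0} =>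
      (if q.1.1 + q.2.1 = (0 : Fin d → ℤ) then (1:ℂ) else 0) *
        ((‖latticePt A q.1.1‖ : ℂ) ^ ν₁ * (‖latticePt A q.2.1‖ : ℂ) ^ ν₂)⁻¹ := by
    apply Summable.of_norm_bounded hCsum
    intro q
    rw [norm_mul]
    have h1 : ‖(if q.1.1 + q.2.1 = (0 : Fin d → ℤ) then (1:ℂ) else 0)‖ ≤ 1 := by
      split <;> simp
    have h2 : ‖((‖latticePt A q.1.1‖ : ℂ) ^ ν₁ * (‖latticePt A q.2.1‖ : ℂ) ^ ν₂)⁻¹‖ =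
        ‖latticePt A q.1.1‖ ^ (-ν₁.re) * ‖latticePt A q.2.1‖ ^ (-ν₂.re) := by
      rw [norm_inv, norm_mul,
        Complex.norm_cpow_eq_rpow_re_of_pos (hrpos q.1),
        Complex.norm_cpow_eq_rpow_re_of_pos (hrpos q.2), mul_inv,
        Real.rpow_neg (norm_nonneg _), Real.rpow_neg (norm_nonneg _)]
    calc ‖(if q.1.1 + q.2.1 = (0 : Fin d → ℤ) then (1:ℂ) else 0)‖ *
          ‖((‖latticePt A q.1.1‖ : ℂ) ^ ν₁ * (‖latticePt A q.2.1‖ : ℂ) ^ ν₂)⁻¹‖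
        ≤ 1 * ‖((‖latticePt A q.1.1‖ : ℂ) ^ ν₁ * (‖latticePt A q.2.1‖ : ℂ) ^ ν₂)⁻¹‖ := by
          apply mul_le_mul_of_nonneg_right h1 (norm_nonneg _)
      _ = ‖latticePt A q.1.1‖ ^ (-ν₁.re) * ‖latticePt A q.2.1‖ ^ (-ν₂.re) := by
          rw [one_mul, h2]
  rw [hdiag.tsum_prod' fun b => hdiag.prod_factor b]
  -- inner sums collapse to the diagonal
  have hneg : ∀ m : {m : Fin d → ℤ // m ≠ 0}, ‖latticePt A (-m.1)‖ = ‖latticePt A m.1‖ := by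
    intro m
    have hcast : (fun j => ((-m.1) j : ℝ)) = -(fun j => (m.1 j : ℝ)) := by
      funext j; simp
    have : latticePt A (-m.1) = -latticePt A m.1 := by
      show WithLp.toLp 2 (A.mulVec _) = -(WithLp.toLp 2 (A.mulVec _))
      rw [hcast, Matrix.mulVec_neg, WithLp.toLp_neg]
    rw [this, norm_neg]
  have hinner : ∀ m₁ : {m : Fin d → ℤ // m ≠ 0},
      (∑' m₂ : {m : Fin d → ℤ // m ≠ 0},
        (if m₁.1 + m₂.1 = (0 : Fin d → ℤ) then (1:ℂ) else 0) *
          ((‖latticePt A m₁.1‖ : ℂ) ^ ν₁ * (‖latticePt A m₂.1‖ : ℂ) ^ ν₂)⁻¹) =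
      ((‖latticePt A m₁.1‖ : ℂ) ^ (ν₁ + ν₂))⁻¹ := by
    intro m₁
    have hb : (⟨-m₁.1, neg_ne_zero.mpr m₁.2⟩ : {m : Fin d → ℤ // m ≠ 0}) ∈ Set.univ := trivial
    rw [tsum_eq_single (⟨-m₁.1, neg_ne_zero.mpr m₁.2⟩ : {m : Fin d → ℤ // m ≠ 0}) ?side]
    · rw [if_pos (by simp), one_mul]
      simp only
      rw [hneg m₁, ← Complex.cpow_add _ _ (by
        exact_mod_cast (hrpos m₁).ne' : (‖latticePt A m₁.1‖ : ℂ) ≠ 0)]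
    · intro m₂ hm₂
      rw [if_neg, zero_mul]
      intro hsum0
      apply hm₂
      apply Subtype.ext
      funext j
      have h := congrFun hsum0 j
      simp only [Pi.add_apply, Pi.zero_apply] at h
      simp only [Pi.neg_apply]
      omega
  -- right-hand side
  rw [epsteinZeta_eq hA]
  exact tsum_congr fun m₁ => (hinner m₁).trans (by
    rw [inner_zero_right, Complex.ofReal_zero, mul_zero, Complex.exp_zero, one_div])
end

section
/- Let d ∈ ℕ, d ≥ 1, and let g : ℝ^d → ℂ be Lebesgue integrable on the cube [0,1/2]^d. Let σ denote the cyclic permutation of coordinates σ(x₁,…,x_d) = (x_d, x₁, …, x_{d−1}). Then the integral over the cube decomposes into d pyramid integrals: ∫_{[0,1/2]^d} g(k) dk = ∑_{j=0}^{d−1} ∫_0^{1/2} ∫_{[0,k_d]^{d−1}} g(σ^j(k₁,…,k_{d−1},k_d)) dk₁ ⋯ dk_{d−1} dk_d. -/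
open MeasureTheory
open Fin.NatCast Fin.CommRing

/-- The cyclic coordinate permutation `σ(x₁, …, x_d) = (x_d, x₁, …, x_{d-1})`. -/
def cyclicShift {d : ℕ} (x : Fin d → ℝ) : Fin d → ℝ := fun i => x ((finRotate d).symm i)

/-- The pyramid where coordinate `m` dominates. -/
def Pyr {n : ℕ} (m : Fin (n + 1)) : Set (Fin (n + 1) → ℝ) :=
  {k | (∀ i, 0 ≤ k i ∧ k i ≤ k m) ∧ k m ≤ 1 / 2}

lemma measurableSet_Pyr {n : ℕ} (m : Fin (n + 1)) : MeasurableSet (Pyr m) := by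
  have h1 : MeasurableSet {k : Fin (n + 1) → ℝ | ∀ i, 0 ≤ k i ∧ k i ≤ k m} := by
    rw [Set.setOf_forall]
    refine MeasurableSet.iInter fun i => ?_
    rw [Set.setOf_and]
    exact (measurableSet_le measurable_const (measurable_pi_apply i)).inter
      (measurableSet_le (measurable_pi_apply i) (measurable_pi_apply m))
  rw [Pyr, Set.setOf_and]
  exact h1.inter (measurableSet_le (measurable_pi_apply m) measurable_const)

lemma volume_eq_coord_null {n : ℕ} {i j : Fin (n + 1)} (hij : j ≠ i) :
    volume {x : Fin (n + 1) → ℝ | x i = x j} = 0 := by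
  obtain ⟨j', hj'⟩ := Fin.exists_succAbove_eq hij
  set e := MeasurableEquiv.piFinSuccAbove (fun _ : Fin (n + 1) => ℝ) i with he
  have hmp : MeasurePreserving e volume volume :=
    volume_preserving_piFinSuccAbove (fun _ : Fin (n + 1) => ℝ) i
  have hT : MeasurableSet {p : ℝ × (Fin n → ℝ) | p.1 = p.2 j'} :=
    measurableSet_eq_fun measurable_fst ((measurable_pi_apply j').comp measurable_snd)
  have hpre : {x : Fin (n + 1) → ℝ | x i = x j} = e ⁻¹' {p | p.1 = p.2 j'} := by
    ext x
    simp only [Set.mem_setOf_eq, Set.mem_preimage, he,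
      MeasurableEquiv.piFinSuccAbove_apply, Fin.insertNthEquiv, Equiv.coe_fn_symm_mk,
      Fin.removeNth, hj']
  rw [hpre, hmp.measure_preimage hT.nullMeasurableSet, Measure.volume_eq_prod,
    Measure.prod_apply_symm hT]
  have hs : ∀ y : Fin n → ℝ,
      ((fun x : ℝ => (x, y)) ⁻¹' {p : ℝ × (Fin n → ℝ) | p.1 = p.2 j'}) = {y j'} := by
    intro y; ext t; simp
  simp [hs]

lemma cyclicShift_eq_piCongrLeft (d : ℕ) :
    (cyclicShift : (Fin d → ℝ) → Fin d → ℝ)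
      = ⇑(MeasurableEquiv.piCongrLeft (fun _ : Fin d => ℝ) (finRotate d)) := by
  funext x i
  conv_rhs => rw [← Equiv.apply_symm_apply (finRotate d) i]
  rw [MeasurableEquiv.piCongrLeft_apply_apply]
  rfl

lemma cyclicShift_measurePreserving (d : ℕ) :
    MeasurePreserving (cyclicShift : (Fin d → ℝ) → Fin d → ℝ) volume volume := by
  rw [cyclicShift_eq_piCongrLeft]
  exact volume_measurePreserving_piCongrLeft _ _

lemma cyclicShift_embedding (d : ℕ) :
    MeasurableEmbedding (cyclicShift : (Fin d → ℝ) → Fin d → ℝ) := by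
  rw [cyclicShift_eq_piCongrLeft]
  exact (MeasurableEquiv.piCongrLeft _ _).measurableEmbedding

lemma cyclicShift_iterate_embedding (d j : ℕ) :
    MeasurableEmbedding (cyclicShift^[j] : (Fin d → ℝ) → Fin d → ℝ) := by
  induction j with
  | zero => exact MeasurableEmbedding.id
  | succ j ih =>
    rw [Function.iterate_succ]
    exact ih.comp (cyclicShift_embedding d)

lemma cyclicShift_preimage_Pyr {n : ℕ} (m : Fin (n + 1)) :
    (cyclicShift : (Fin (n + 1) → ℝ) → _) ⁻¹' Pyr m = Pyr ((finRotate (n + 1)).symm m) := by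
  ext x
  simp only [Pyr, Set.mem_preimage, Set.mem_setOf_eq, cyclicShift]
  constructor
  · rintro ⟨h1, h2⟩
    refine ⟨fun i => ?_, h2⟩
    have := h1 (finRotate (n + 1) i)
    rwa [Equiv.symm_apply_apply] at this
  · rintro ⟨h1, h2⟩
    exact ⟨fun i => h1 _, h2⟩

lemma cyclicShift_iterate_preimage_Pyr {n : ℕ} (j : ℕ) :
    (cyclicShift^[j] : (Fin (n + 1) → ℝ) → _) ⁻¹'
        Pyr ((⇑(finRotate (n + 1)))^[j] (Fin.last n)) = Pyr (Fin.last n) := by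
  induction j with
  | zero => simp
  | succ j ih =>
    rw [Function.iterate_succ' (f := (cyclicShift : (Fin (n + 1) → ℝ) → _)),
      Function.iterate_succ' (f := ⇑(finRotate (n + 1))), Function.comp_apply,
      Set.preimage_comp, cyclicShift_preimage_Pyr, Equiv.symm_apply_apply, ih]

lemma finRotate_iterate_last (n j : ℕ) :
    (⇑(finRotate (n + 1)))^[j] (Fin.last n) = Fin.last n + (j : Fin (n + 1)) := by
  induction j with
  | zero => simp
  | succ j ih =>
    rw [Function.iterate_succ', Function.comp_apply, ih, finRotate_succ_apply]
    push_cast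
    ring

lemma pyr_integral {n : ℕ} (f : (Fin (n + 1) → ℝ) → ℂ)
    (hf : IntegrableOn f (Pyr (Fin.last n))) :
    ∫ x in Pyr (Fin.last n), f x =
      ∫ t in (0 : ℝ)..(1 / 2),
        ∫ v in Set.univ.pi fun _ : Fin n => Set.Icc (0 : ℝ) t,
          f (fun i : Fin (n + 1) => if h : (i : ℕ) < n then v ⟨i, h⟩ else t) := by
  set e := (MeasurableEquiv.piFinSuccAbove (fun _ : Fin (n + 1) => ℝ) (Fin.last n)).symm with he
  have hmp : MeasurePreserving e volume volume :=
    (volume_preserving_piFinSuccAbove (fun _ : Fin (n + 1) => ℝ) (Fin.last n)).symm _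
  have hkey : ∀ (t : ℝ) (v : Fin n → ℝ),
      e (t, v) = fun i : Fin (n + 1) => if h : (i : ℕ) < n then v ⟨i, h⟩ else t := by
    intro t v
    funext i
    rw [he, MeasurableEquiv.piFinSuccAbove_symm_apply]
    simp only [Fin.insertNthEquiv_last, Fin.snocEquiv, Equiv.coe_fn_mk]
    by_cases h : (i : ℕ) < n
    · simp only [Fin.snoc, h, dite_true, cast_eq]
      rfl
    · simp [Fin.snoc, h]
  set T : Set (ℝ × (Fin n → ℝ)) :=
    {p | (0 ≤ p.1 ∧ p.1 ≤ 1 / 2) ∧ ∀ i, 0 ≤ p.2 i ∧ p.2 i ≤ p.1} with hTdef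
  have hT : MeasurableSet T := by
    rw [hTdef, Set.setOf_and]
    refine MeasurableSet.inter ?_ ?_
    · rw [Set.setOf_and]
      exact (measurableSet_le measurable_const measurable_fst).inter
        (measurableSet_le measurable_fst measurable_const)
    · rw [Set.setOf_forall]
      refine MeasurableSet.iInter fun i => ?_
      rw [Set.setOf_and]
      exact (measurableSet_le measurable_const
        (measurable_snd.eval)).inter
        (measurableSet_le (measurable_snd.eval) measurable_fst)
  have hpre : e ⁻¹' Pyr (Fin.last n) = T := by
    ext ⟨t, v⟩
    simp only [Set.mem_preimage, hkey, Pyr, Set.mem_setOf_eq, hTdef, Fin.val_last,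
      lt_self_iff_false, dite_false]
    constructor
    · rintro ⟨h1, h2⟩
      refine ⟨⟨?_, h2⟩, fun i => ?_⟩
      · simpa using (h1 (Fin.last n)).1
      · simpa [i.is_lt] using h1 (Fin.castSucc i)
    · rintro ⟨⟨h0, h2⟩, h3⟩
      refine ⟨fun i => ?_, h2⟩
      by_cases hi : (i : ℕ) < n
      · simpa [hi] using h3 ⟨i, hi⟩
      · simp [hi, h0]
  have hFi : IntegrableOn (fun p => f (e p)) T volume := by
    have h2 := (hmp.restrict_preimage_emb e.measurableEmbedding
      (Pyr (Fin.last n))).integrable_comp_emb e.measurableEmbedding (g := f)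
    rw [hpre] at h2
    exact h2.2 hf
  calc ∫ x in Pyr (Fin.last n), f x
      = ∫ p in e ⁻¹' Pyr (Fin.last n), f (e p) :=
        (hmp.setIntegral_preimage_emb e.measurableEmbedding f _).symm
    _ = ∫ p in T, f (e p) := by rw [hpre]
    _ = ∫ p, T.indicator (fun p => f (e p)) p := (integral_indicator hT).symm
    _ = ∫ t, ∫ v, T.indicator (fun p => f (e p)) (t, v) := by
        rw [Measure.volume_eq_prod]
        refine integral_prod _ ?_
        rw [← Measure.volume_eq_prod]
        exact (integrable_indicator_iff hT).2 hFi
    _ = ∫ t, (Set.Icc (0 : ℝ) (1 / 2)).indicator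
          (fun t => ∫ v in Set.univ.pi fun _ : Fin n => Set.Icc (0 : ℝ) t,
            f (e (t, v))) t := by
        congr 1
        funext t
        by_cases ht : t ∈ Set.Icc (0 : ℝ) (1 / 2)
        · rw [Set.indicator_of_mem ht,
            ← integral_indicator (MeasurableSet.univ_pi fun _ => measurableSet_Icc)]
          congr 1
          funext v
          by_cases hv : v ∈ Set.univ.pi fun _ : Fin n => Set.Icc (0 : ℝ) t
          · rw [Set.indicator_of_mem hv, Set.indicator_of_mem]
            rw [hTdef]
            simp only [Set.mem_Icc] at ht
            simp only [Set.mem_pi, Set.mem_univ, Set.mem_Icc, forall_true_left] at hv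
            exact ⟨ht, fun i => hv i⟩
          · rw [Set.indicator_of_notMem hv, Set.indicator_of_notMem]
            rw [hTdef]
            simp only [Set.mem_pi, Set.mem_univ, Set.mem_Icc, forall_true_left] at hv
            push_neg at hv
            obtain ⟨i, hi⟩ := hv
            intro hmem
            exact absurd (hmem.2 i).2 (not_le.2 (hi (hmem.2 i).1))
        · rw [Set.indicator_of_notMem ht]
          have hz : ∀ v : Fin n → ℝ, T.indicator (fun p => f (e p)) (t, v) = 0 := by
            intro v
            refine Set.indicator_of_notMem ?_ _
            rw [hTdef]
            simp only [Set.mem_Icc] at ht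
            intro hmem
            exact ht ⟨hmem.1.1, hmem.1.2⟩
          simp [hz]
    _ = ∫ t in Set.Icc (0 : ℝ) (1 / 2),
          ∫ v in Set.univ.pi fun _ : Fin n => Set.Icc (0 : ℝ) t, f (e (t, v)) :=
        integral_indicator measurableSet_Icc
    _ = ∫ t in Set.Ioc (0 : ℝ) (1 / 2),
          ∫ v in Set.univ.pi fun _ : Fin n => Set.Icc (0 : ℝ) t, f (e (t, v)) :=
        integral_Icc_eq_integral_Ioc
    _ = ∫ t in (0 : ℝ)..(1 / 2),
          ∫ v in Set.univ.pi fun _ : Fin n => Set.Icc (0 : ℝ) t, f (e (t, v)) :=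
        (intervalIntegral.integral_of_le (by norm_num)).symm
    _ = _ := by
        simp_rw [hkey]

/-- For `g` Lebesgue integrable on the cube `[0, 1/2]^d`, the integral
over the cube decomposes into `d` pyramid integrals:
`∫_{[0,1/2]^d} g(k) dk = ∑_{j=0}^{d-1} ∫_0^{1/2} ∫_{[0,k_d]^{d-1}}
  g(σ^j(k₁, …, k_{d-1}, k_d)) dk₁ ⋯ dk_{d-1} dk_d`. -/
theorem cube_integral_eq_sum_pyramids (d : ℕ) (hd : 1 ≤ d) (g : (Fin d → ℝ) → ℂ)
    (hg : IntegrableOn g (Set.univ.pi fun _ => Set.Icc (0 : ℝ) (1 / 2))) :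
    ∫ k in Set.univ.pi fun _ => Set.Icc (0 : ℝ) (1 / 2), g k =
      ∑ j ∈ Finset.range d,
        ∫ t in (0 : ℝ)..(1 / 2),
          ∫ v in Set.univ.pi fun _ : Fin (d - 1) => Set.Icc (0 : ℝ) t,
            g (cyclicShift^[j]
              fun i : Fin d => if h : (i : ℕ) < d - 1 then v ⟨i, h⟩ else t) := by
  obtain ⟨n, rfl⟩ : ∃ n, d = n + 1 := ⟨d - 1, (Nat.succ_pred_eq_of_pos hd).symm⟩
  simp only [Nat.add_sub_cancel]
  have hPyr_sub : ∀ m : Fin (n + 1),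
      Pyr m ⊆ Set.univ.pi fun _ : Fin (n + 1) => Set.Icc (0 : ℝ) (1 / 2) := by
    rintro m k ⟨h1, h2⟩ i -
    exact ⟨(h1 i).1, (h1 i).2.trans h2⟩
  have hcube : (Set.univ.pi fun _ : Fin (n + 1) => Set.Icc (0 : ℝ) (1 / 2)) = ⋃ m, Pyr m := by
    ext k
    simp only [Set.mem_pi, Set.mem_univ, Set.mem_Icc, forall_true_left, Set.mem_iUnion]
    constructor
    · intro h
      obtain ⟨m, hm⟩ := Finite.exists_max k
      exact ⟨m, ⟨fun i => ⟨(h i).1, hm i⟩, (h m).2⟩⟩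
    · rintro ⟨m, hm⟩ i
      exact ⟨(hm.1 i).1, (hm.1 i).2.trans hm.2⟩
  have hdisj : Pairwise (Function.onFun (AEDisjoint volume) fun m : Fin (n + 1) => Pyr m) := by
    intro m m' hmm'
    refine measure_mono_null ?_ (volume_eq_coord_null (i := m) (j := m') hmm'.symm)
    rintro x ⟨⟨h1, -⟩, ⟨h1', -⟩⟩
    exact le_antisymm ((h1' m).2) ((h1 m').2)
  have key : ∀ j : ℕ,
      ∫ x in Pyr (Fin.last n + (j : Fin (n + 1))), g x =
        ∫ t in (0 : ℝ)..(1 / 2),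
          ∫ v in Set.univ.pi fun _ : Fin n => Set.Icc (0 : ℝ) t,
            g (cyclicShift^[j]
              fun i : Fin (n + 1) => if h : (i : ℕ) < n then v ⟨i, h⟩ else t) := by
    intro j
    have hmpj : MeasurePreserving (cyclicShift^[j] : (Fin (n + 1) → ℝ) → _) volume volume :=
      (cyclicShift_measurePreserving (n + 1)).iterate j
    have hembj := cyclicShift_iterate_embedding (n + 1) j
    have hpre : (cyclicShift^[j] : (Fin (n + 1) → ℝ) → _) ⁻¹'
        Pyr (Fin.last n + (j : Fin (n + 1))) = Pyr (Fin.last n) := by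
      rw [← finRotate_iterate_last n j]
      exact cyclicShift_iterate_preimage_Pyr j
    rw [← hmpj.setIntegral_preimage_emb hembj g (Pyr (Fin.last n + (j : Fin (n + 1)))), hpre]
    have hfi : IntegrableOn (fun x => g (cyclicShift^[j] x)) (Pyr (Fin.last n)) := by
      have h0 : IntegrableOn g (Pyr (Fin.last n + (j : Fin (n + 1)))) :=
        hg.mono_set (hPyr_sub _)
      have h2 := (hmpj.restrict_preimage_emb hembj
        (Pyr (Fin.last n + (j : Fin (n + 1))))).integrable_comp_emb hembj (g := g)
      rw [hpre] at h2
      exact h2.2 h0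
    exact pyr_integral (fun x => g (cyclicShift^[j] x)) hfi
  rw [hcube] at hg ⊢
  rw [integral_iUnion_ae (fun m => (measurableSet_Pyr m).nullMeasurableSet) hdisj hg,
    tsum_fintype]
  have hreindex : ∑ m : Fin (n + 1), ∫ x in Pyr m, g x =
      ∑ m : Fin (n + 1), ∫ x in Pyr (Fin.last n + m), g x :=
    (Function.Bijective.sum_comp (Equiv.addLeft (Fin.last n)).bijective
      (fun m => ∫ x in Pyr m, g x)).symm
  rw [hreindex]
  have hrange : ∑ m : Fin (n + 1), ∫ x in Pyr (Fin.last n + m), g x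
      = ∑ j ∈ Finset.range (n + 1),
          ∫ x in Pyr (Fin.last n + (j : Fin (n + 1))), g x := by
    rw [← Fin.sum_univ_eq_sum_range
      (fun j : ℕ => ∫ x in Pyr (Fin.last n + (j : Fin (n + 1))), g x) (n + 1)]
    exact Finset.sum_congr rfl fun m _ => by rw [Fin.cast_val_eq_self]
  rw [hrange]
  refine Finset.sum_congr rfl fun j _ => ?_
  rw [key j]
  rfl
end
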